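/- Let q ≥ 2, a > 1, p > 0 be such that the recursive hierarchy property holds: K is a C_t-set, where a C_0-set is a singleton and a C_i-set of size q^i partitions into q C_{i−1}-sets with distance exactly 2p/a^{t−i} between different parts and maximum distance 2p/a^{t−i} overall. Then every subset K' ⊆ K with |K'| > q satisfies dr(K') ≥ a. -/

import Mathlib

noncomputable def dr {n : ℕ} (L : Finset (Fin n → Bool)) : ℝ :=
  ((sSup {d : ℕ | ∃ x ∈ L, ∃ y ∈ L, hammingDist x y = d} : ℕ) : ℝ) /
  ((sInf {d : ℕ | ∃ x ∈ L, ∃ y ∈ L, x ≠ y ∧ hammingDist x y = d} : ℕ) : ℝ)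

/-- `IsCSet q a p t i L` : `L` is a `C_i`-set (within a hierarchy of depth `t`). -/
def IsCSet {n : ℕ} (q : ℕ) (a p : ℝ) (t : ℕ) : ℕ → Finset (Fin n → Bool) → Prop
  | 0, L => ∃ x, L = {x}
  | (i + 1), L =>
      L.card = q ^ (i + 1) ∧
      (∀ x ∈ L, ∀ y ∈ L, (hammingDist x y : ℝ) ≤ 2 * p / a ^ (t - (i + 1))) ∧
      (∃ x ∈ L, ∃ y ∈ L, (hammingDist x y : ℝ) = 2 * p / a ^ (t - (i + 1))) ∧
      ∃ f : Fin q → Finset (Fin n → Bool),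
        (∀ r s, r ≠ s → Disjoint (f r) (f s)) ∧
        Finset.univ.biUnion f = L ∧
        (∀ r, IsCSet q a p t i (f r)) ∧
        (∀ r s, r ≠ s → ∀ x ∈ f r, ∀ y ∈ f s,
          (hammingDist x y : ℝ) = 2 * p / a ^ (t - (i + 1)))

lemma csets_dist_bound {n q : ℕ} {a p : ℝ} (ha : 1 < a) (hp : 0 < p) {t i : ℕ}
    {L : Finset (Fin n → Bool)} (h : IsCSet q a p t i L) :
    ∀ x ∈ L, ∀ y ∈ L, (hammingDist x y : ℝ) ≤ 2 * p / a ^ (t - i) := by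
  have ha0 : (0:ℝ) < a := lt_trans zero_lt_one ha
  cases i with
  | zero =>
    obtain ⟨x0, rfl⟩ := h
    intro x hx y hy
    simp only [Finset.mem_singleton] at hx hy
    subst hx; subst hy
    simp only [hammingDist_self, Nat.cast_zero]
    exact div_nonneg (by linarith) (pow_nonneg ha0.le _)
  | succ i => exact h.2.1

lemma csets_main {n q t : ℕ} {a p : ℝ} (hq : 2 ≤ q) (ha : 1 < a) (hp : 0 < p) :
    ∀ i, i ≤ t → ∀ L : Finset (Fin n → Bool), IsCSet q a p t i L →
      ∀ K' ⊆ L, q < K'.card → a ≤ dr K' := by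
  have ha0 : (0:ℝ) < a := lt_trans zero_lt_one ha
  intro i
  induction i with
  | zero =>
    intro _ L h K' hsub hcard
    obtain ⟨x0, rfl⟩ := h
    have h1 := Finset.card_le_card hsub
    simp only [Finset.card_singleton] at h1
    omega
  | succ i ih =>
    intro hit L h K' hsub hcard
    obtain ⟨hcardL, hbound, _, f, hdisj, hunion, hparts, hcross⟩ := h
    by_cases hc : ∃ r, K' ⊆ f r
    · obtain ⟨r, hr⟩ := hc
      exact ih (Nat.le_of_succ_le hit) (f r) (hparts r) K' hr hcard
    · -- K' meets two different parts
      push_neg at hc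
      have hKsub : ∀ x ∈ K', ∃ r, x ∈ f r := by
        intro x hx
        have hxL : x ∈ L := hsub hx
        rw [← hunion] at hxL
        obtain ⟨r, _, hr⟩ := Finset.mem_biUnion.mp hxL
        exact ⟨r, hr⟩
      -- pick x,y in K' in different parts
      have hK'ne : K'.Nonempty := Finset.card_pos.mp (by omega)
      obtain ⟨x, hxK⟩ := hK'ne
      obtain ⟨r, hxr⟩ := hKsub x hxK
      obtain ⟨y, hyK, hyr⟩ := Finset.not_subset.mp (hc r)
      obtain ⟨s, hys⟩ := hKsub y hyK
      have hrs : r ≠ s := fun hsr => hyr (hsr ▸ hys)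
      have hDxy : (hammingDist x y : ℝ) = 2 * p / a ^ (t - (i + 1)) :=
        hcross r s hrs x hxr y hys
      -- pigeonhole: some part contains two points of K'
      have hpig : ∃ r, 2 ≤ (K' ∩ f r).card := by
        by_contra hno
        push_neg at hno
        have hKeq : K' = Finset.univ.biUnion (fun r => K' ∩ f r) := by
          ext z
          simp only [Finset.mem_biUnion, Finset.mem_inter, Finset.mem_univ, true_and]
          constructor
          · intro hz
            obtain ⟨r, hr⟩ := hKsub z hz
            exact ⟨r, hz, hr⟩
          · rintro ⟨r, hz, _⟩; exact hz
        have h1 : K'.card ≤ ∑ r : Fin q, (K' ∩ f r).card := by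
          conv_lhs => rw [hKeq]
          exact Finset.card_biUnion_le
        have h2 : ∑ r : Fin q, (K' ∩ f r).card ≤ ∑ _r : Fin q, 1 :=
          Finset.sum_le_sum (fun r _ => Nat.lt_succ_iff.mp (hno r))
        simp only [Finset.sum_const, Finset.card_univ, Fintype.card_fin, smul_eq_mul,
          mul_one] at h2
        omega
      obtain ⟨r0, hr0⟩ := hpig
      obtain ⟨u, hu, v, hv, huv⟩ := Finset.one_lt_card.mp hr0
      have huK : u ∈ K' := (Finset.mem_inter.mp hu).1
      have hvK : v ∈ K' := (Finset.mem_inter.mp hv).1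
      have huvbound : (hammingDist u v : ℝ) ≤ 2 * p / a ^ (t - i) :=
        csets_dist_bound ha hp (hparts r0) u (Finset.mem_inter.mp hu).2
          v (Finset.mem_inter.mp hv).2
      -- now estimate dr
      set Ssup := {d : ℕ | ∃ x ∈ K', ∃ y ∈ K', hammingDist x y = d} with hSsup
      set Sinf := {d : ℕ | ∃ x ∈ K', ∃ y ∈ K', x ≠ y ∧ hammingDist x y = d} with hSinf
      have hbdd : BddAbove Ssup := by
        refine ⟨n, ?_⟩
        rintro d ⟨x, _, y, _, rfl⟩
        calc hammingDist x y ≤ Fintype.card (Fin n) := hammingDist_le_card_fintype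
          _ = n := Fintype.card_fin n
      have hsup_ge : hammingDist x y ≤ sSup Ssup :=
        le_csSup hbdd ⟨x, hxK, y, hyK, rfl⟩
      have hinf_le : sInf Sinf ≤ hammingDist u v :=
        Nat.sInf_le ⟨u, huK, v, hvK, huv, rfl⟩
      have hinf_pos : 0 < sInf Sinf := by
        have hne : Sinf.Nonempty := ⟨hammingDist u v, u, huK, v, hvK, huv, rfl⟩
        obtain ⟨x', _, y', _, hxy', hd⟩ := Nat.sInf_mem hne
        rw [← hd]
        exact Nat.pos_of_ne_zero (fun h0 => hxy' (hammingDist_eq_zero.mp h0))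
      have hinf_posR : (0:ℝ) < (sInf Sinf : ℕ) := by exact_mod_cast hinf_pos
      rw [dr]
      show a ≤ (sSup Ssup : ℕ) / ((sInf Sinf : ℕ) : ℝ)
      rw [le_div_iff₀ hinf_posR]
      have ht : t - i = (t - (i + 1)) + 1 := by omega
      have hane : a ≠ 0 := ne_of_gt ha0
      have key : a * (2 * p / a ^ (t - i)) = 2 * p / a ^ (t - (i + 1)) := by
        rw [ht, pow_succ]
        field_simp
      calc a * ((sInf Sinf : ℕ) : ℝ)
          ≤ a * (hammingDist u v : ℝ) := by
            exact mul_le_mul_of_nonneg_left (by exact_mod_cast hinf_le) ha0.le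
        _ ≤ a * (2 * p / a ^ (t - i)) := mul_le_mul_of_nonneg_left huvbound ha0.le
        _ = 2 * p / a ^ (t - (i + 1)) := key
        _ = (hammingDist x y : ℝ) := hDxy.symm
        _ ≤ ((sSup Ssup : ℕ) : ℝ) := by exact_mod_cast hsup_ge

theorem stmt_9 {n q t : ℕ} (a p : ℝ) (hq : 2 ≤ q) (ha : 1 < a) (hp : 0 < p)
    (K : Finset (Fin n → Bool)) (hK : IsCSet q a p t t K) :
    ∀ K' ⊆ K, q < K'.card → a ≤ dr K' := by
  exact csets_main hq ha hp t le_rfl K hK
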